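/- Under the same DC power flow setup with Γ < 0 instead of Γ > 0: if k ≠ t is a vertex such that G contains a path from s to k avoiding t, then θ̂_k − θ̂_t < θ_k − θ_t. -/

import Mathlib

open Matrix

/-- Variant of Lemma 1 with Γ < 0: the relative phase angle strictly decreases. -/
theorem stmt_2 {n : ℕ} (G : SimpleGraph (Fin n)) (hconn : G.Connected)
    (w : Fin n → Fin n → ℝ)
    (hsym : ∀ k m, w k m = w m k)
    (hpos : ∀ k m, G.Adj k m → 0 < w k m)
    (hzero : ∀ k m, ¬ G.Adj k m → w k m = 0)
    (B : Matrix (Fin n) (Fin n) ℝ)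
    (hB : ∀ k m, B k m = if k = m then ∑ j, w k j else -(w k m))
    (θ θhat P : Fin n → ℝ) (s t : Fin n) (Γ : ℝ) (hΓ : Γ < 0)
    (h1 : B.mulVec θ = P)
    (h2 : B.mulVec θhat = P + Γ • ((Pi.single s 1 : Fin n → ℝ) - Pi.single t 1))
    (k : Fin n) (hk : k ≠ t)
    (hpath : ∃ p : G.Walk s k, t ∉ p.support) :
    θhat k - θhat t < θ k - θ t := by
  classical
  set δ : Fin n → ℝ := θhat - θ with hδdef
  have hwnn : ∀ a b, 0 ≤ w a b := by
    intro a b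
    by_cases h : G.Adj a b
    · exact (hpos a b h).le
    · rw [hzero a b h]
  -- Laplacian quadratic form expansion
  have hform : ∀ v, (B.mulVec δ) v = ∑ m, w v m * (δ v - δ m) := by
    intro v
    have hww : w v v = 0 := hzero v v (G.irrefl)
    have key : ∀ m : Fin n, B v m * δ m
        = -(w v m) * δ m + (if v = m then ((∑ j, w v j) + w v m) * δ m else 0) := by
      intro m
      rw [hB]
      by_cases h : v = m
      · subst h; simp; ring
      · simp [h]
    simp only [Matrix.mulVec, dotProduct]
    rw [Finset.sum_congr rfl (fun m _ => key m), Finset.sum_add_distrib]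
    rw [Finset.sum_ite_eq Finset.univ v (fun m => ((∑ j, w v j) + w v m) * δ m)]
    simp only [Finset.mem_univ, if_true, hww, add_zero]
    simp only [mul_sub, Finset.sum_sub_distrib, ← Finset.sum_mul, neg_mul,
      Finset.sum_neg_distrib]
    ring
  have hsub : B.mulVec δ = Γ • ((Pi.single s 1 : Fin n → ℝ) - Pi.single t 1) := by
    rw [hδdef, Matrix.mulVec_sub, h1, h2]
    abel
  have hval : ∀ v, (B.mulVec δ) v
      = Γ * ((if v = s then (1:ℝ) else 0) - (if v = t then (1:ℝ) else 0)) := by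
    intro v
    rw [hsub]
    simp [Pi.single_apply]
  haveI : Nonempty (Fin n) := hconn.nonempty
  obtain ⟨v0, hv0⟩ := Finite.exists_max δ
  -- Step A: maximum propagates to neighbors at vertices ≠ t
  have stepA : ∀ v, v ≠ t → δ v = δ v0 → ∀ u, G.Adj v u → δ u = δ v0 := by
    intro v hv hmax u hadj
    have hle : (B.mulVec δ) v ≤ 0 := by
      rw [hval v]
      simp only [hv, if_false]
      by_cases hvs : v = s
      · simp [hvs]; linarith
      · simp [hvs]
    have hterms : ∀ m ∈ Finset.univ, 0 ≤ w v m * (δ v - δ m) := by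
      intro m _
      apply mul_nonneg (hwnn v m)
      have := hv0 m
      rw [hmax]
      linarith
    have hsum0 : ∑ m, w v m * (δ v - δ m) = 0 := by
      have h0 : (0:ℝ) ≤ ∑ m, w v m * (δ v - δ m) := Finset.sum_nonneg hterms
      have h1' : ∑ m, w v m * (δ v - δ m) ≤ 0 := by rw [← hform v]; exact hle
      linarith
    have hzm := (Finset.sum_eq_zero_iff_of_nonneg hterms).mp hsum0 u (Finset.mem_univ u)
    have hwpos := hpos v u hadj
    have : δ v - δ u = 0 := by
      rcases mul_eq_zero.mp hzm with h | h
      · exact absurd h (ne_of_gt hwpos)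
      · exact h
    rw [← hmax]; linarith
  -- Step B: propagation along any walk: if the start has max value, then
  -- either t has max value or the end does
  have walkind : ∀ {a b : Fin n} (q : G.Walk a b), δ a = δ v0 → δ t = δ v0 ∨ δ b = δ v0 := by
    intro a b q
    induction q with
    | nil => exact fun h => Or.inr h
    | @cons x y z hadj p ih =>
      intro h
      by_cases hxt : x = t
      · exact Or.inl (hxt ▸ h)
      · exact ih (stepA x hxt h y hadj)
  -- t attains the maximum
  have htmax : δ t = δ v0 := by
    obtain ⟨q⟩ := hconn.preconnected v0 t
    rcases walkind q rfl with h | h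
    · exact h
    · exact h
  -- backward propagation along a path avoiding t
  have pathind : ∀ {a b : Fin n} (q : G.Walk a b), t ∉ q.support → δ b = δ v0 → δ a = δ v0 := by
    intro a b q
    induction q with
    | nil => exact fun _ h => h
    | @cons x y z hadj p ih =>
      intro hts hb
      have hbsupp : t ∉ p.support := by
        intro h
        exact hts (by rw [SimpleGraph.Walk.support_cons]; exact List.mem_cons_of_mem _ h)
      have hmid : δ y = δ v0 := ih hbsupp hb
      have hne : y ≠ t := by
        intro h
        exact hbsupp (h ▸ p.start_mem_support)
      exact stepA y hne hmid x hadj.symm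
  obtain ⟨p, hp⟩ := hpath
  -- suppose for contradiction that δ k ≥ δ t
  by_contra hcon
  push_neg at hcon
  have hδk : δ t ≤ δ k := by
    have : θ k - θ t ≤ θhat k - θhat t := hcon
    simp only [hδdef, Pi.sub_apply]
    linarith
  have hkmax : δ k = δ v0 := by
    have := hv0 k
    rw [htmax] at hδk
    linarith
  have hsmax : δ s = δ v0 := pathind p hp hkmax
  have hst : s ≠ t := by
    intro h
    exact hp (h ▸ p.start_mem_support)
  have hsval : (B.mulVec δ) s = Γ := by
    rw [hval s]
    simp [hst]
  have hnn : 0 ≤ (B.mulVec δ) s := by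
    rw [hform s]
    apply Finset.sum_nonneg
    intro m _
    apply mul_nonneg (hwnn s m)
    have := hv0 m
    rw [hsmax]
    linarith
  rw [hsval] at hnn
  linarith
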